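/- For n >= 7, if T is a perfect 2-coloring of GP(n,3) with parameter matrix [[1,2],[2,1]] and there exists an index i with T(a_i) = T(b_i) = T(b_{i+1}) = 1 and T(a_{i+1}) = 2, then 10 divides n. -/
import Mathlib

/-- The generalized Petersen graph `GP n k`. Vertices are pairs `(s, i)` with
`s : Bool` (`false` = outer vertex `aᵢ`, `true` = inner vertex `bᵢ`) and `i : ZMod n`.
Edges: `aᵢ aᵢ₊₁`, `aᵢ bᵢ`, `bᵢ bᵢ₊ₖ`. -/
def GP (n k : ℕ) : SimpleGraph (Bool × ZMod n) :=
  SimpleGraph.fromRel (fun v w =>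
    (v.1 = false ∧ w.1 = false ∧ w.2 = v.2 + 1) ∨
    (v.1 = false ∧ w.1 = true ∧ w.2 = v.2) ∨
    (v.1 = true ∧ w.1 = true ∧ w.2 = v.2 + (k : ZMod n)))

/-- `T` is a perfect 2-coloring of `G` with parameter matrix `A`:
`T` is surjective onto the two colors (color `0` = white = "1", color `1` = black = "2"),
and every vertex of color `i` has exactly `A i j` neighbors of color `j`. -/
def IsPerfectColoring {V : Type*} (G : SimpleGraph V) (T : V → Fin 2)
    (A : Matrix (Fin 2) (Fin 2) ℕ) : Prop :=
  Function.Surjective T ∧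
  ∀ v : V, ∀ j : Fin 2, {w | G.Adj v w ∧ T w = j}.ncard = A (T v) j

lemma zmod_shift_ne (n m : ℕ) (hn : 7 ≤ n) (hm : 0 < m) (hm6 : m ≤ 6) (x y : ZMod n)
    (hxy : y = x + (m : ZMod n)) : x ≠ y := by
  haveI : NeZero n := ⟨by omega⟩
  intro h
  subst h
  have h0 : ((m : ℕ) : ZMod n) = 0 := left_eq_add.mp hxy
  rw [ZMod.natCast_eq_zero_iff] at h0
  have := Nat.le_of_dvd hm h0
  omega

lemma gp_adj_outer (n : ℕ) (hn : 7 ≤ n) (j : ZMod n) (w : Bool × ZMod n) :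
    (GP n 3).Adj (false, j) w ↔ w = (false, j - 1) ∨ w = (false, j + 1) ∨ w = (true, j) := by
  obtain ⟨s, m⟩ := w
  cases s <;>
    simp only [GP, SimpleGraph.fromRel_adj, Prod.mk.injEq, ne_eq, Bool.false_eq_true,
      Bool.true_eq_false, false_and, and_false, true_and, and_true, false_or, or_false,
      not_false_iff, true_and, Nat.cast_ofNat]
  constructor
  · rintro ⟨hne, h | h⟩
    · right; exact h
    · left; rw [eq_sub_iff_add_eq]; exact h.symm
  · rintro (h | h) <;> subst h
    · exact ⟨fun hj => zmod_shift_ne n 1 hn one_pos (by norm_num) (j - 1) j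
        (by push_cast; ring) hj.symm, Or.inr (by ring)⟩
    · exact ⟨fun hj => zmod_shift_ne n 1 hn one_pos (by norm_num) j (j + 1)
        (by push_cast; ring) hj, Or.inl rfl⟩

lemma gp_adj_inner (n : ℕ) (hn : 7 ≤ n) (j : ZMod n) (w : Bool × ZMod n) :
    (GP n 3).Adj (true, j) w ↔ w = (true, j - 3) ∨ w = (true, j + 3) ∨ w = (false, j) := by
  obtain ⟨s, m⟩ := w
  cases s <;>
    simp only [GP, SimpleGraph.fromRel_adj, Prod.mk.injEq, ne_eq, Bool.false_eq_true,
      Bool.true_eq_false, false_and, and_false, true_and, and_true, false_or, or_false,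
      not_false_iff, true_and, Nat.cast_ofNat]
  · exact eq_comm
  constructor
  · rintro ⟨hne, h | h⟩
    · right; exact h
    · left; rw [eq_sub_iff_add_eq]; exact h.symm
  · rintro (h | h) <;> subst h
    · refine ⟨fun hj => zmod_shift_ne n 3 hn (by norm_num) (by norm_num) (j - 3) j
        (by push_cast; ring) hj.symm, Or.inr ?_⟩
      ring
    · exact ⟨fun hj => zmod_shift_ne n 3 hn (by norm_num) (by norm_num) j (j + 3)
        (by push_cast; ring) hj, Or.inl rfl⟩

lemma ncard_tri {V : Type*} [DecidableEq V] (T : V → Fin 2) (x y z : V)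
    (hxy : x ≠ y) (hxz : x ≠ z) (hyz : y ≠ z) (c : Fin 2) :
    {w | w ∈ ({x, y, z} : Set V) ∧ T w = c}.ncard =
      (if T x = c then 1 else 0) + (if T y = c then 1 else 0) + (if T z = c then 1 else 0) := by
  classical
  have hset : {w | w ∈ ({x, y, z} : Set V) ∧ T w = c}
      = ↑(({x, y, z} : Finset V).filter (fun w => T w = c)) := by
    ext w
    simp [and_comm]
  rw [hset, Set.ncard_coe_finset, Finset.card_filter,
    Finset.sum_insert (by simp [hxy, hxz]), Finset.sum_insert (by simp [hyz]),
    Finset.sum_singleton]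
  ring

lemma abstract_period (n : ℕ) (hn : 7 ≤ n) (a b : ℕ → ℕ)
    (hva : ∀ t, a t ≤ 1) (hvb : ∀ t, b t ≤ 1)
    (hA : ∀ t, a t + a (t + 2) + b (t + 1) + a (t + 1) = 2)
    (hB : ∀ t, b t + b (t + 6) + a (t + 3) + b (t + 3) = 2)
    (va0 : a 0 = 0) (va1 : a 1 = 1) (vb0 : b 0 = 0) (vb1 : b 1 = 0)
    (hpern : ∀ t, a (t + n) = a t) : 10 ∣ n := by
  have va2 : a 2 = 1 := by have h := hA 0; norm_num at h; have ha2 := hva 2; omega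
  obtain ⟨va3, vb2⟩ : a 3 = 0 ∧ b 2 = 0 := by have h := hA 1; norm_num at h; omega
  obtain ⟨vb6, vb3⟩ : b 6 = 1 ∧ b 3 = 1 := by have h := hB 0; norm_num at h; have hb6 := hvb 6; have hb3 := hvb 3; omega
  obtain ⟨vb9, va6⟩ : b 9 = 0 ∧ a 6 = 0 := by have h := hB 3; norm_num at h; omega
  have va4 : a 4 = 0 := by have h := hA 2; norm_num at h; omega
  obtain ⟨va5, vb4⟩ : a 5 = 1 ∧ b 4 = 1 := by have h := hA 3; norm_num at h; have ha5 := hva 5; have hb4 := hvb 4; omega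
  have vb5 : b 5 = 1 := by have h := hA 4; norm_num at h; have hb5 := hvb 5; omega
  have va7 : a 7 = 0 := by have h := hA 5; norm_num at h; omega
  obtain ⟨va8, vb7⟩ : a 8 = 1 ∧ b 7 = 1 := by have h := hA 6; norm_num at h; have ha8 := hva 8; have hb7 := hvb 7; omega
  have vb8 : b 8 = 0 := by have h := hB 2; norm_num at h; omega
  have vb10 : b 10 = 0 := by have h := hB 4; norm_num at h; omega
  have vb11 : b 11 = 0 := by have h := hB 5; norm_num at h; omega
  obtain ⟨vb14, va11⟩ : b 14 = 1 ∧ a 11 = 1 := by have h := hB 8; norm_num at h; have hb14 := hvb 14; have ha11 := hva 11; omega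
  have va9 : a 9 = 1 := by have h := hA 7; norm_num at h; have ha9 := hva 9; omega
  have va10 : a 10 = 0 := by have h := hA 8; norm_num at h; omega
  have va12 : a 12 = 1 := by have h := hA 10; norm_num at h; have ha12 := hva 12; omega
  obtain ⟨va13, vb12⟩ : a 13 = 0 ∧ b 12 = 0 := by have h := hA 11; norm_num at h; omega
  have vb13 : b 13 = 1 := by have h := hB 7; norm_num at h; have hb13 := hvb 13; omega
  have vb15 : b 15 = 1 := by have h := hB 9; norm_num at h; have hb15 := hvb 15; omega
  have va14 : a 14 = 0 := by have h := hA 12; norm_num at h; omega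
  have va15 : a 15 = 1 := by have h := hA 13; norm_num at h; have ha15 := hva 15; omega
  have per10 : ∀ t, a (t + 10) = a t ∧ b (t + 10) = b t := by
    intro t
    induction t using Nat.strong_induction_on with
    | _ t ih =>
      rcases lt_or_ge t 6 with h6 | h6
      · interval_cases t <;> norm_num <;> omega
      · obtain ⟨s, rfl⟩ : ∃ s, t = s + 6 := ⟨t - 6, by omega⟩
        obtain ⟨ia4, ib4⟩ := ih (s + 4) (by omega)
        obtain ⟨ia5, ib5⟩ := ih (s + 5) (by omega)
        obtain ⟨ia0, ib0⟩ := ih s (by omega)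
        obtain ⟨ia3, ib3⟩ := ih (s + 3) (by omega)
        have h1 := hA (s + 14)
        have h2 := hA (s + 4)
        have h3 := hB (s + 10)
        have h4 := hB s
        refine ⟨?_, ?_⟩ <;>
          ring_nf at h1 h2 h3 h4 ia4 ib4 ia5 ib5 ia0 ib0 ia3 ib3 ⊢ <;> omega
  have per10k : ∀ k t, a (t + 10 * k) = a t := by
    intro k
    induction k with
    | zero => intro t; norm_num
    | succ k ihk =>
      intro t
      have e : t + 10 * (k + 1) = (t + 10 * k) + 10 := by ring
      rw [e, (per10 (t + 10 * k)).1, ihk t]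
  rcases Nat.eq_zero_or_pos (n % 10) with h0 | hpos
  · exact Nat.dvd_of_mod_eq_zero h0
  · exfalso
    have hr : ∀ t, a (t + n % 10) = a t := by
      intro t
      have h1 := per10k (n / 10) (t + n % 10)
      have e : t + n % 10 + 10 * (n / 10) = t + n := by omega
      rw [e, hpern t] at h1
      exact h1.symm
    have h10 : n % 10 < 10 := Nat.mod_lt _ (by norm_num)
    have hcase : n % 10 = 1 ∨ n % 10 = 2 ∨ n % 10 = 3 ∨ n % 10 = 4 ∨ n % 10 = 5 ∨
        n % 10 = 6 ∨ n % 10 = 7 ∨ n % 10 = 8 ∨ n % 10 = 9 := by omega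
    rcases hcase with h | h | h | h | h | h | h | h | h <;> simp only [h] at hr <;>
      (have e0 := hr 0; have e1 := hr 1; have e2 := hr 2; have e4 := hr 4;
       norm_num at e0 e1 e2 e4; omega)

theorem stmt_15 (n : ℕ) (hn : 7 ≤ n) (T : Bool × ZMod n → Fin 2)
    (h : IsPerfectColoring (GP n 3) T !![1, 2; 2, 1])
    (i : ZMod n)
    (hi : T (false, i) = 0 ∧ T (true, i) = 0 ∧ T (true, i + 1) = 0 ∧
      T (false, i + 1) = 1) :
    10 ∣ n := by
  classical
  obtain ⟨-, hcnt⟩ := h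
  obtain ⟨hi0, hi1, hi2, hi3⟩ := hi
  have e2 : ∀ u : Fin 2, u = 0 ∨ u = 1 := by decide
  have key : ∀ (v x y z : Bool × ZMod n),
      (∀ w, (GP n 3).Adj v w ↔ w = x ∨ w = y ∨ w = z) → x ≠ y → x ≠ z → y ≠ z →
      (T x).val + (T y).val + (T z).val + (T v).val = 2 := by
    intro v x y z hadj hxy hxz hyz
    have hc := hcnt v 1
    have hset : {w | (GP n 3).Adj v w ∧ T w = 1} = {w | w ∈ ({x, y, z} : Set _) ∧ T w = 1} := by
      ext w
      simp only [Set.mem_setOf_eq, hadj w, Set.mem_insert_iff, Set.mem_singleton_iff]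
    rw [hset, ncard_tri T x y z hxy hxz hyz] at hc
    have hite : ∀ u : Fin 2, (if u = 1 then 1 else 0 : ℕ) = u.val := by decide
    rw [hite, hite, hite] at hc
    rcases e2 (T v) with hv | hv <;> rw [hv] at hc <;>
      norm_num [Matrix.cons_val_zero, Matrix.cons_val_one, Matrix.head_cons] at hc <;>
      rw [hv] <;> norm_num <;> omega
  have houter : ∀ j : ZMod n, (T (false, j - 1)).val + (T (false, j + 1)).val +
      (T (true, j)).val + (T (false, j)).val = 2 := by
    intro j
    refine key (false, j) _ _ _ (gp_adj_outer n hn j) ?_ ?_ ?_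
    · simp only [ne_eq, Prod.mk.injEq, true_and]
      exact fun hj => zmod_shift_ne n 2 hn (by norm_num) (by norm_num) (j - 1) (j + 1)
        (by push_cast; ring) hj
    · simp
    · simp
  have hinner : ∀ j : ZMod n, (T (true, j - 3)).val + (T (true, j + 3)).val +
      (T (false, j)).val + (T (true, j)).val = 2 := by
    intro j
    refine key (true, j) _ _ _ (gp_adj_inner n hn j) ?_ ?_ ?_
    · simp only [ne_eq, Prod.mk.injEq, true_and]
      exact fun hj => zmod_shift_ne n 6 hn (by norm_num) (by norm_num) (j - 3) (j + 3)
        (by push_cast; ring) hj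
    · simp
    · simp
  refine abstract_period n hn (fun t => (T (false, i + (t : ZMod n))).val)
    (fun t => (T (true, i + (t : ZMod n))).val)
    (fun t => Nat.lt_succ_iff.mp (T (false, i + (t : ZMod n))).isLt)
    (fun t => Nat.lt_succ_iff.mp (T (true, i + (t : ZMod n))).isLt)
    ?_ ?_ ?_ ?_ ?_ ?_ ?_
  · intro t
    have e1 : (i + ((t + 1 : ℕ) : ZMod n)) - 1 = i + (t : ZMod n) := by push_cast; ring
    have e2 : (i + ((t + 1 : ℕ) : ZMod n)) + 1 = i + ((t + 2 : ℕ) : ZMod n) := by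
      push_cast; ring
    have h := houter (i + ((t + 1 : ℕ) : ZMod n))
    rw [e1, e2] at h
    exact h
  · intro t
    have e1 : (i + ((t + 3 : ℕ) : ZMod n)) - 3 = i + (t : ZMod n) := by push_cast; ring
    have e2 : (i + ((t + 3 : ℕ) : ZMod n)) + 3 = i + ((t + 6 : ℕ) : ZMod n) := by
      push_cast; ring
    have h := hinner (i + ((t + 3 : ℕ) : ZMod n))
    rw [e1, e2] at h
    exact h
  · show (T (false, i + ((0 : ℕ) : ZMod n))).val = 0
    rw [Nat.cast_zero, add_zero, hi0]
    rfl
  · show (T (false, i + ((1 : ℕ) : ZMod n))).val = 1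
    rw [Nat.cast_one, hi3]
    rfl
  · show (T (true, i + ((0 : ℕ) : ZMod n))).val = 0
    rw [Nat.cast_zero, add_zero, hi1]
    rfl
  · show (T (true, i + ((1 : ℕ) : ZMod n))).val = 0
    rw [Nat.cast_one, hi2]
    rfl
  · intro t
    show (T (false, i + ((t + n : ℕ) : ZMod n))).val = (T (false, i + (t : ZMod n))).val
    have e : ((t + n : ℕ) : ZMod n) = (t : ZMod n) := by
      push_cast [ZMod.natCast_self]
      ring
    rw [e]
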